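/- For every integer n ≥ 1 there is no group of more than 3 sociable n-chains: there do not exist an integer l ≥ 4 and an n-chain x such that the chains x, s(x), s^[2](x), …, s^[l−1](x) are pairwise distinct n-chains and s^[l](x) = x. -/

import Mathlib

/-- The counting operator: `countOp n x j` is the number of indices `i` with `x i = j`. -/
def countOp (n : ℕ) (x : Fin n → ℕ) : Fin n → ℕ :=
  fun j => (Finset.univ.filter fun i => x i = (j : ℕ)).card

namespace NoSoc

def Phi (n : ℕ) (M : Multiset ℕ) : Multiset ℕ := (Multiset.range n).map fun j => M.count j

def vals {n : ℕ} (x : Fin n → ℕ) : Multiset ℕ := Multiset.map x Finset.univ.val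

lemma count_vals {n : ℕ} (x : Fin n → ℕ) (c : ℕ) :
    (vals x).count c = (Finset.univ.filter fun i => x i = c).card := by
  rw [vals, Multiset.count_map, Finset.card_filter]
  simp [Finset.sum_boole]
  congr 1
  exact Multiset.filter_congr (fun a _ => by tauto)

lemma countOp_eq {n : ℕ} (x : Fin n → ℕ) (j : Fin n) :
    countOp n x j = (vals x).count (j : ℕ) := (count_vals x j).symm

lemma vals_countOp {n : ℕ} (x : Fin n → ℕ) : vals (countOp n x) = Phi n (vals x) := by
  have h1 : vals (countOp n x) =
      Multiset.map ((fun c => (vals x).count c) ∘ Fin.val) (Finset.univ : Finset (Fin n)).val := by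
    rw [vals]; exact Multiset.map_congr rfl (fun j _ => countOp_eq x j)
  rw [h1, ← Multiset.map_map, Phi]
  congr 1
  have h2 : (Finset.univ : Finset (Fin n)).map Fin.valEmbedding = Finset.range n := by
    rw [Fin.map_valEmbedding_univ]; ext j; simp
  have h3 := congrArg Finset.val h2
  rw [Finset.map_val] at h3; exact h3

lemma card_le_sum_pos (S : Multiset ℕ) (h : ∀ a ∈ S, a ≠ 0) : Multiset.card S ≤ S.sum := by
  induction S using Multiset.induction_on with
  | empty => simp
  | cons a S ih =>
    simp only [Multiset.card_cons, Multiset.sum_cons]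
    have ha := h a (Multiset.mem_cons_self a S)
    have := ih (fun b hb => h b (Multiset.mem_cons_of_mem hb))
    omega

lemma sum_image_le (s : Finset ℕ) (f : ℕ → ℕ) : ∑ b ∈ s.image f, b ≤ ∑ a ∈ s, f a := by
  classical
  induction s using Finset.induction_on with
  | empty => simp
  | @insert a s ha ih =>
    rw [Finset.image_insert, Finset.sum_insert ha]
    by_cases hfa : f a ∈ s.image f
    · rw [Finset.insert_eq_self.mpr hfa]
      omega
    · rw [Finset.sum_insert hfa]
      omega

lemma finset_sum_lb (s : Finset ℕ) (h0 : 0 ∉ s) : s.card * (s.card + 1) ≤ 2 * ∑ v ∈ s, v := by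
  induction s using Finset.strongInduction with
  | _ s ih =>
    rcases s.eq_empty_or_nonempty with rfl | hne
    · simp
    · have hms : s.max' hne ∈ s := s.max'_mem hne
      set m := s.max' hne with hm
      have hsub : s.erase m ⊂ s := Finset.erase_ssubset hms
      have hrec := ih (s.erase m) hsub (fun hc => h0 (Finset.mem_of_mem_erase hc))
      have hcard : s.card ≤ m := by
        have hsubI : s ⊆ Finset.Icc 1 m := by
          intro v hv
          simp only [Finset.mem_Icc]
          exact ⟨Nat.one_le_iff_ne_zero.mpr (fun hv0 => h0 (hv0 ▸ hv)), s.le_max' v hv⟩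
        calc s.card ≤ (Finset.Icc 1 m).card := Finset.card_le_card hsubI
        _ = m := by simp
      have hsum : m + ∑ v ∈ s.erase m, v = ∑ v ∈ s, v :=
        Finset.add_sum_erase s (fun v : ℕ => v) hms
      have hc : s.card = (s.erase m).card + 1 := by
        rw [Finset.card_erase_of_mem hms]
        have : 1 ≤ s.card := Finset.card_pos.mpr hne
        omega
      nlinarith [hrec, hcard, hc, hsum]

def mult (P : Multiset ℕ) : Multiset ℕ := P.toFinset.val.map fun v => P.count v
def T (S : Multiset ℕ) : Multiset ℕ := 1 ::ₘ mult S

lemma mult_cons_of_not_mem {b : ℕ} {S : Multiset ℕ} (hb : b ∉ S) :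
    mult (b ::ₘ S) = 1 ::ₘ mult S := by
  have h1 : (b ::ₘ S).toFinset = insert b S.toFinset := Multiset.toFinset_cons b S
  have h2 : (insert b S.toFinset).val = b ::ₘ S.toFinset.val :=
    Finset.insert_val_of_notMem (by simpa using hb)
  rw [mult, h1, h2, Multiset.map_cons]
  congr 1
  · simp [Multiset.count_cons_self, Multiset.count_eq_zero_of_notMem hb]
  · rw [mult]
    exact Multiset.map_congr rfl (fun v hv => by
      have : v ≠ b := by rintro rfl; exact hb (by simpa using hv)
      simp [Multiset.count_cons, this])

def slist : List (Multiset ℕ) :=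
  [0, {1}, {2}, {1,1}, {3}, {2,1}, {1,1,1}, {4}, {3,1}, {2,2}, {2,1,1}, {1,1,1,1}]

lemma enum4 (S : Multiset ℕ) (h0 : ∀ a ∈ S, a ≠ 0) (h4 : S.sum ≤ 4) : S ∈ slist := by
  induction S using Multiset.induction_on with
  | empty => simp [slist]
  | cons a S ih =>
    have ha : a ≠ 0 := h0 a (Multiset.mem_cons_self a S)
    have hs : S.sum ≤ 4 := by
      have : (a ::ₘ S).sum = a + S.sum := Multiset.sum_cons a S
      omega
    have ha4 : a ≤ 4 := by
      have : (a ::ₘ S).sum = a + S.sum := Multiset.sum_cons a S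
      omega
    have hmem := ih (fun b hb => h0 b (Multiset.mem_cons_of_mem hb)) hs
    have hsum : a + S.sum ≤ 4 := by
      have : (a ::ₘ S).sum = a + S.sum := Multiset.sum_cons a S
      omega
    have ha1 : 1 ≤ a := Nat.one_le_iff_ne_zero.mpr ha
    fin_cases hmem <;> (try simp only [Multiset.sum_zero, Multiset.sum_cons] at hsum ⊢) <;>
      interval_cases a <;> revert hsum <;> decide

lemma T_check : ∀ S ∈ slist, T^[6] S = T^[4] S := by decide

lemma card_Phi (n : ℕ) (M : Multiset ℕ) : Multiset.card (Phi n M) = n := by simp [Phi]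

lemma sum_Phi (n : ℕ) (M : Multiset ℕ) (hval : ∀ a ∈ M, a < n) (hcard : Multiset.card M = n) :
    (Phi n M).sum = n := by
  have h1 : (Phi n M).sum = ∑ j ∈ Finset.range n, M.count j := rfl
  have hsub : M.toFinset ⊆ Finset.range n := by
    intro a ha; simp only [Finset.mem_range]; exact hval a (Multiset.mem_toFinset.mp ha)
  have h2 : ∑ j ∈ M.toFinset, M.count j = ∑ j ∈ Finset.range n, M.count j :=
    Finset.sum_subset hsub (fun x _ hx =>
      Multiset.count_eq_zero_of_notMem (fun hm => hx (Multiset.mem_toFinset.mpr hm)))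
  rw [h1, ← h2, Multiset.toFinset_sum_count_eq, hcard]

lemma filter_Phi (n : ℕ) (M : Multiset ℕ) (hval : ∀ a ∈ M, a < n) :
    (Phi n M).filter (fun a => a ≠ 0) = M.toFinset.val.map (fun j => M.count j) := by
  rw [Phi, Multiset.filter_map]
  congr 1
  have h : Finset.filter (fun j => M.count j ≠ 0) (Finset.range n) = M.toFinset := by
    ext j
    simp only [Finset.mem_filter, Finset.mem_range, ne_eq, Multiset.count_ne_zero,
      Multiset.mem_toFinset]
    constructor
    · rintro ⟨_, h⟩; exact h
    · intro h; exact ⟨hval j h, h⟩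
  calc Multiset.filter ((fun a => a ≠ 0) ∘ fun j => M.count j) (Multiset.range n)
      = (Finset.filter (fun j => M.count j ≠ 0) (Finset.range n)).val := rfl
    _ = M.toFinset.val := by rw [h]

lemma decomp (M : Multiset ℕ) :
    M.filter (fun a => a ≠ 0) + Multiset.replicate (M.count 0) 0 = M := by
  have h1 : M.filter (fun a => ¬ a ≠ 0) = Multiset.replicate (M.count 0) 0 := by
    have h2 : M.filter (fun a => ¬ a ≠ 0) = M.filter (fun a => a = 0) :=
      Multiset.filter_congr (fun a _ => by tauto)
    rw [h2]
    have := Multiset.filter_eq' M 0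
    simpa using this
  rw [← h1, Multiset.filter_add_not]

lemma card_decomp (M : Multiset ℕ) :
    Multiset.card (M.filter (fun a => a ≠ 0)) + M.count 0 = Multiset.card M := by
  have := congrArg Multiset.card (decomp M)
  simpa using this

lemma toFinset_val_cons (M : Multiset ℕ) (h0 : 0 ∈ M) :
    M.toFinset.val = 0 ::ₘ (M.toFinset.erase 0).val := by
  have h1 : insert 0 (M.toFinset.erase 0) = M.toFinset :=
    Finset.insert_erase (Multiset.mem_toFinset.mpr h0)
  have h2 := Finset.insert_val_of_notMem (s := M.toFinset.erase 0) (a := 0)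
    (Finset.notMem_erase _ _)
  rw [h1] at h2
  exact h2

lemma sum_mult (M : Multiset ℕ) :
    ∑ j ∈ M.toFinset.erase 0, M.count j = Multiset.card (M.filter (fun a => a ≠ 0)) := by
  by_cases h0 : 0 ∈ M
  · have h1 : M.count 0 + ∑ j ∈ M.toFinset.erase 0, M.count j = ∑ j ∈ M.toFinset, M.count j :=
      Finset.add_sum_erase M.toFinset (fun j => M.count j) (Multiset.mem_toFinset.mpr h0)
    have h2 := Multiset.toFinset_sum_count_eq M
    have h3 := card_decomp M
    omega
  · have h1 : M.toFinset.erase 0 = M.toFinset :=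
      Finset.erase_eq_of_notMem (fun hc => h0 (Multiset.mem_toFinset.mp hc))
    have h2 := Multiset.toFinset_sum_count_eq M
    have h4 : M.filter (fun a => a ≠ 0) = M :=
      Multiset.filter_eq_self.mpr (fun a ha => fun hc => h0 (hc ▸ ha))
    rw [h1, h2, h4]

lemma count_le_card_filter (M : Multiset ℕ) (j : ℕ) (hj : j ≠ 0) :
    M.count j ≤ Multiset.card (M.filter (fun a => a ≠ 0)) := by
  have h1 : M.count j = (M.filter (fun a => a ≠ 0)).count j := by
    rw [Multiset.count_filter]
    simp [hj]
  rw [h1]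
  exact Multiset.count_le_card _ _

def EE (n : ℕ) (S : Multiset ℕ) : Multiset ℕ :=
  ((n - S.sum) ::ₘ S) + Multiset.replicate (n - (Multiset.card S + 1)) 0

lemma small_check : ∀ n ∈ [2,3,4,5,6,7,8], ∀ S ∈ slist,
    S.sum ≤ n - 1 → Multiset.card S + 1 ≤ n - 1 →
    (∀ j < 10, ∀ a ∈ (Phi n)^[j] (EE n S), a < n) →
    ((Phi n)^[8] (EE n S) = (Phi n)^[6] (EE n S) ∨
      (Phi n)^[9] (EE n S) = (Phi n)^[6] (EE n S)) := by decide

end NoSoc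
open NoSoc in
theorem no_sociable_group_of_length_ge_four (n : ℕ) (hn : 1 ≤ n) :
    ¬ ∃ (l : ℕ) (x : Fin n → ℕ), 4 ≤ l ∧
      (∀ k < l, ∀ j, (countOp n)^[k] x j < n) ∧
      (∀ k < l, ∀ k' < l, k ≠ k' → (countOp n)^[k] x ≠ (countOp n)^[k'] x) ∧
      (countOp n)^[l] x = x := by
  rintro ⟨l, x, hl4, hlt, hdist, hper⟩
  have hl0 : 0 < l := by omega
  -- function-level periodicity
  have hiter_add : ∀ k, (countOp n)^[k + l] x = (countOp n)^[k] x := by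
    intro k; rw [Function.iterate_add_apply, hper]
  have hiter_ml : ∀ m k, (countOp n)^[k + m * l] x = (countOp n)^[k] x := by
    intro m
    induction m with
    | zero => intro k; simp
    | succ m ih =>
      intro k
      have h1 : k + (m + 1) * l = (k + m * l) + l := by ring
      rw [h1, hiter_add (k + m * l), ih k]
  have hmod : ∀ k, (countOp n)^[k] x = (countOp n)^[k % l] x := by
    intro k
    conv_lhs => rw [show k = k % l + (k / l) * l from by
      rw [Nat.mul_comm]; exact (Nat.mod_add_div k l).symm]
    rw [hiter_ml]
  have hvalall : ∀ k j, (countOp n)^[k] x j < n := by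
    intro k j; rw [hmod]; exact hlt (k % l) (Nat.mod_lt _ hl0) j
  set M : ℕ → Multiset ℕ := fun k => vals ((countOp n)^[k] x) with hMdef
  have hMsucc : ∀ k, M (k + 1) = Phi n (M k) := by
    intro k
    simp only [hMdef]
    rw [Function.iterate_succ_apply']
    exact vals_countOp _
  have hMiter : ∀ k j, M (k + j) = (Phi n)^[j] (M k) := by
    intro k j
    induction j with
    | zero => simp
    | succ j ih =>
      rw [show k + (j + 1) = (k + j) + 1 by ring, hMsucc, ih]
      exact (Function.iterate_succ_apply' _ _ _).symm
  have hMcard : ∀ k, Multiset.card (M k) = n := by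
    intro k
    simp only [hMdef, vals, Multiset.card_map]
    simpa using Finset.card_fin n
  have hMval : ∀ k a, a ∈ M k → a < n := by
    intro k a ha
    simp only [hMdef, vals, Multiset.mem_map] at ha
    obtain ⟨i, _, rfl⟩ := ha
    exact hvalall k i
  have hMper : ∀ k, M (k + l) = M k := by intro k; simp only [hMdef, hiter_add]
  have hMperm : ∀ m k, M (k + m * l) = M k := by intro m k; simp only [hMdef, hiter_ml]
  have hMmod : ∀ k, M k = M (k % l) := by
    intro k; simp only [hMdef]; rw [← hmod]
  have hMfun : ∀ a b, M a = M b → (countOp n)^[a + 1] x = (countOp n)^[b + 1] x := by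
    intro a b h
    funext j
    rw [Function.iterate_succ_apply', Function.iterate_succ_apply', countOp_eq, countOp_eq]
    show (M a).count (j : ℕ) = (M b).count (j : ℕ)
    rw [h]
  have hMne : ∀ a b, a < l → b < l → a ≠ b → M a ≠ M b := by
    intro a b ha hb hab hEq
    have h2 := hMfun a b hEq
    have e1 : (countOp n)^[(a + 1) % l] x = (countOp n)^[(b + 1) % l] x := by
      rw [← hmod, ← hmod, h2]
    refine hdist ((a + 1) % l) (Nat.mod_lt _ hl0) ((b + 1) % l) (Nat.mod_lt _ hl0) ?_ e1
    have hc1 : ((a + 1) % l = a + 1) ∨ ((a + 1) % l = 0 ∧ a + 1 = l) := by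
      rcases lt_or_eq_of_le (Nat.succ_le_of_lt ha) with h | h
      · exact Or.inl (Nat.mod_eq_of_lt h)
      · refine Or.inr ⟨?_, h⟩
        have h' : a + 1 = l := h
        rw [h', Nat.mod_self]
    have hc2 : ((b + 1) % l = b + 1) ∨ ((b + 1) % l = 0 ∧ b + 1 = l) := by
      rcases lt_or_eq_of_le (Nat.succ_le_of_lt hb) with h | h
      · exact Or.inl (Nat.mod_eq_of_lt h)
      · refine Or.inr ⟨?_, h⟩
        have h' : b + 1 = l := h
        rw [h', Nat.mod_self]
    rcases hc1 with h1 | ⟨h1, h1'⟩ <;> rcases hc2 with h2' | ⟨h2', h2''⟩ <;> omega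
  have hMsum : ∀ k, (M k).sum = n := by
    have hs1 : ∀ k, (M (k + 1)).sum = n := by
      intro k; rw [hMsucc]; exact sum_Phi n (M k) (hMval k) (hMcard k)
    intro k
    cases k with
    | zero =>
      have h0 : M 0 = M l := by
        have := hMper 0
        rw [zero_add] at this
        exact this.symm
      have h1 : M l = M ((l - 1) + 1) := by congr 1; omega
      rw [h0, h1]; exact hs1 _
    | succ k => exact hs1 k
  have hn2 : 2 ≤ n := by
    by_contra hc
    have hn1 : n = 1 := by omega
    have h1 := hMsum 1
    have h2 : (M 1).sum = 0 := Multiset.sum_eq_zero (fun a ha => by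
      have := hMval 1 a ha; omega)
    omega
  -- positive part and its length
  set P : ℕ → Multiset ℕ := fun k => (M k).filter (fun a => a ≠ 0) with hPdef
  set L : ℕ → ℕ := fun k => Multiset.card (P k) with hLdef
  have hPsum : ∀ k, (P k).sum = n := by
    intro k
    have h1 := congrArg Multiset.sum (decomp (M k))
    simp only [Multiset.sum_add, Multiset.sum_replicate, smul_zero, add_zero] at h1
    simp only [hPdef]
    rw [h1, hMsum]
  have hL1 : ∀ k, 1 ≤ L k := by
    intro k
    have hne : P k ≠ 0 := by
      intro h
      have := hPsum k
      rw [h] at this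
      simp at this
      omega
    have := Multiset.card_pos.mpr hne
    simp only [hLdef]
    omega
  have hcount0 : ∀ k, L k + (M k).count 0 = n := by
    intro k
    have := card_decomp (M k)
    rw [hMcard k] at this
    exact this
  have hLlt : ∀ k, L k < n := by
    intro k
    by_contra hc
    push_neg at hc
    have hc0 : (M k).count 0 = 0 := by have := hcount0 k; omega
    have h0nm : (0 : ℕ) ∉ M k := by rw [← Multiset.count_eq_zero]; exact hc0
    have hall1 : ∀ a ∈ M k, a = 1 := by
      intro a ha
      by_contra ha1
      have ha0 : a ≠ 0 := fun h => h0nm (h ▸ ha)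
      have ha2 : 2 ≤ a := by omega
      have he : a ::ₘ (M k).erase a = M k := Multiset.cons_erase ha
      have hsum' : a + ((M k).erase a).sum = n := by
        have h5 := congrArg Multiset.sum he
        rw [Multiset.sum_cons] at h5
        rw [h5, hMsum]
      have hce : Multiset.card ((M k).erase a) + 1 = n := by
        have h5 := congrArg Multiset.card he
        rw [Multiset.card_cons] at h5
        have := hMcard k
        omega
      have hpos : ∀ b ∈ (M k).erase a, b ≠ 0 :=
        fun b hb hb0 => h0nm (hb0 ▸ Multiset.mem_of_mem_erase hb)
      have := card_le_sum_pos _ hpos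
      omega
    have hrep : M k = Multiset.replicate n 1 := by
      rw [← hMcard k]
      exact (Multiset.eq_replicate_card).mpr hall1
    have hcnt1 : (M k).count 1 = n := by rw [hrep]; simp
    have hmem : (n : ℕ) ∈ M (k + 1) := by
      rw [hMsucc, Phi]
      refine Multiset.mem_map.mpr ⟨1, ?_, hcnt1⟩
      rw [Multiset.mem_range]; omega
    exact absurd (hMval (k + 1) n hmem) (lt_irrefl n)
  have h0mem : ∀ k, (0 : ℕ) ∈ M k := by
    intro k
    rw [← Multiset.count_pos]
    have := hcount0 k
    have := hLlt k
    omega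
  -- multiplicities of nonzero values
  set Sm : ℕ → Multiset ℕ :=
    fun k => ((M k).toFinset.erase 0).val.map (fun j => (M k).count j) with hSmdef
  have hPfilter : ∀ k, (M (k + 1)).filter (fun a => a ≠ 0) = ((M k).count 0) ::ₘ Sm k := by
    intro k
    rw [hMsucc, filter_Phi n (M k) (hMval k), toFinset_val_cons _ (h0mem k), Multiset.map_cons]
  have hPosPhi : ∀ k, P (k + 1) = ((M k).count 0) ::ₘ Sm k := by
    intro k
    simp only [hPdef]
    exact hPfilter k
  have hSmsum : ∀ k, (Sm k).sum = L k := by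
    intro k
    have h1 : (Sm k).sum = ∑ j ∈ (M k).toFinset.erase 0, (M k).count j := by
      simp only [hSmdef]; rfl
    rw [h1, sum_mult]
  have hLcard : ∀ k, L (k + 1) = Multiset.card (Sm k) + 1 := by
    intro k
    have h1 : L (k + 1) = Multiset.card (P (k + 1)) := by simp only [hLdef]
    rw [h1, hPosPhi, Multiset.card_cons]
  have hSmpos : ∀ k a, a ∈ Sm k → a ≠ 0 := by
    intro k a ha
    simp only [hSmdef, Multiset.mem_map] at ha
    obtain ⟨j, hj, rfl⟩ := ha
    have hjm : j ∈ (M k).toFinset := Finset.mem_of_mem_erase (Finset.mem_val.mp hj)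
    exact Multiset.count_ne_zero.mpr (Multiset.mem_toFinset.mp hjm)
  have hSmle : ∀ k a, a ∈ Sm k → a ≤ L k := by
    intro k a ha
    simp only [hSmdef, Multiset.mem_map] at ha
    obtain ⟨j, hj, rfl⟩ := ha
    have hj0 : j ≠ 0 := Finset.ne_of_mem_erase (Finset.mem_val.mp hj)
    have := count_le_card_filter (M k) j hj0
    simp only [hLdef, hPdef]
    exact this
  -- bound on number of distinct multiplicities
  set tk : ℕ → ℕ :=
    fun k => (((M k).toFinset.erase 0).image (fun j => (M k).count j)).card with htkdef
  have hDt : ∀ k, Multiset.card (Sm (k + 1)) ≤ tk k + 1 := by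
    intro k
    have hcard1 : Multiset.card (Sm (k + 1)) = ((M (k + 1)).toFinset.erase 0).card := by
      simp only [hSmdef, Multiset.card_map]; rfl
    rw [hcard1]
    have hsub : (M (k + 1)).toFinset.erase 0 ⊆
        insert ((M k).count 0) (((M k).toFinset.erase 0).image (fun j => (M k).count j)) := by
      intro v hv
      have hv0 : v ≠ 0 := Finset.ne_of_mem_erase hv
      have hvm : v ∈ M (k + 1) := Multiset.mem_toFinset.mp (Finset.mem_of_mem_erase hv)
      rw [hMsucc, Phi] at hvm
      rw [Multiset.mem_map] at hvm
      obtain ⟨j, hj, hje⟩ := hvm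
      rcases Nat.eq_zero_or_pos j with rfl | hjpos
      · exact Finset.mem_insert.mpr (Or.inl hje.symm)
      · refine Finset.mem_insert.mpr (Or.inr ?_)
        refine Finset.mem_image.mpr ⟨j, ?_, hje⟩
        refine Finset.mem_erase.mpr ⟨by omega, ?_⟩
        rw [Multiset.mem_toFinset, ← Multiset.count_pos]
        omega
    calc ((M (k + 1)).toFinset.erase 0).card ≤ _ := Finset.card_le_card hsub
    _ ≤ tk k + 1 := Finset.card_insert_le _ _
  have htsum : ∀ k, tk k * (tk k + 1) ≤ 2 * L k := by
    intro k
    have h0 : (0 : ℕ) ∉ ((M k).toFinset.erase 0).image (fun j => (M k).count j) := by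
      intro hc
      obtain ⟨j, hj, hje⟩ := Finset.mem_image.mp hc
      have hjm : j ∈ M k := Multiset.mem_toFinset.mp (Finset.mem_of_mem_erase hj)
      have := Multiset.count_pos.mpr hjm
      omega
    have h1 := finset_sum_lb _ h0
    have h2 := sum_image_le ((M k).toFinset.erase 0) (fun j => (M k).count j)
    have h3 := sum_mult (M k)
    have h4 : Multiset.card ((M k).filter (fun a => a ≠ 0)) = L k := by
      simp only [hLdef, hPdef]
    calc tk k * (tk k + 1) ≤ 2 * ∑ b ∈ ((M k).toFinset.erase 0).image (fun j => (M k).count j), b := h1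
    _ ≤ 2 * L k := by omega
  -- L ≤ 4 everywhere
  have hLmod : ∀ k, L k = L (k % l) := by
    intro k
    have hP : P k = P (k % l) := by
      simp only [hPdef]; rw [← hMmod]
    simp only [hLdef]; rw [hP]
  have hLper : ∀ k, L (k + l) = L k := by
    intro k
    have hP : P (k + l) = P k := by
      simp only [hPdef]; rw [hMper]
    simp only [hLdef]; rw [hP]
  obtain ⟨K, hKub, k0, hk0⟩ :
      ∃ K, (∀ k, L k ≤ K) ∧ ∃ k0, L k0 = K := by
    have hne : ((Finset.range l).image L).Nonempty :=
      ⟨L 0, Finset.mem_image.mpr ⟨0, Finset.mem_range.mpr hl0, rfl⟩⟩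
    refine ⟨((Finset.range l).image L).max' hne, ?_, ?_⟩
    · intro k
      rw [hLmod k]
      exact Finset.le_max' _ _ (Finset.mem_image.mpr
        ⟨k % l, Finset.mem_range.mpr (Nat.mod_lt _ hl0), rfl⟩)
    · obtain ⟨k1, _, he⟩ := Finset.mem_image.mp (((Finset.range l).image L).max'_mem hne)
      exact ⟨k1, he⟩
  have hK4 : K ≤ 4 := by
    by_contra hc
    push_neg at hc
    have hj2 : (k0 + 2 * l - 2) + 2 = k0 + 2 * l := by omega
    have hLj2 : L ((k0 + 2 * l - 2) + 2) = K := by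
      rw [hj2, show k0 + 2 * l = (k0 + l) + l by ring, hLper, hLper, hk0]
    have hKle : K ≤ tk (k0 + 2 * l - 2) + 2 := by
      have h1 := hLcard ((k0 + 2 * l - 2) + 1)
      have h2 := hDt (k0 + 2 * l - 2)
      have h3 : (k0 + 2 * l - 2) + 1 + 1 = (k0 + 2 * l - 2) + 2 := by omega
      rw [h3] at h1
      omega
    have h3 := htsum (k0 + 2 * l - 2)
    have h4 : L (k0 + 2 * l - 2) ≤ K := hKub _
    obtain ⟨a, ha⟩ : ∃ a, K = a + 2 := ⟨K - 2, by omega⟩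
    have ha3 : 3 ≤ a := by omega
    have h5 : a ≤ tk (k0 + 2 * l - 2) := by omega
    have h6 : a * (a + 1) ≤ tk (k0 + 2 * l - 2) * (tk (k0 + 2 * l - 2) + 1) :=
      Nat.mul_le_mul h5 (by omega)
    have h7 : a * (a + 1) ≤ 2 * (a + 2) := by omega
    nlinarith [h7, ha3]
  have hL4 : ∀ k, L k ≤ 4 := fun k => (hKub k).trans hK4
  -- structure of cycle elements
  have hstruct : ∀ k, M (k + 1) =
      ((n - L k) ::ₘ Sm k) + Multiset.replicate (n - L (k + 1)) 0 := by
    intro k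
    have h2 : (M (k + 1)).count 0 = n - L (k + 1) := by have := hcount0 (k + 1); omega
    have h3 : (M k).count 0 = n - L k := by have := hcount0 k; omega
    have h4 : (M (k + 1)).filter (fun a => a ≠ 0) = (n - L k) ::ₘ Sm k := by
      rw [hPfilter k, h3]
    calc M (k + 1) = (M (k + 1)).filter (fun a => a ≠ 0) +
          Multiset.replicate ((M (k + 1)).count 0) 0 := (decomp _).symm
    _ = ((n - L k) ::ₘ Sm k) + Multiset.replicate (n - L (k + 1)) 0 := by rw [h4, h2]
  have hrec : ∀ k, Sm (k + 1) = mult ((n - L k) ::ₘ Sm k) := by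
    intro k
    have hQ0 : ∀ v ∈ (n - L k) ::ₘ Sm k, v ≠ 0 := by
      intro v hv
      rcases Multiset.mem_cons.mp hv with rfl | hv'
      · have := hLlt k; omega
      · exact hSmpos k v hv'
    have hTF : (M (k + 1)).toFinset.erase 0 = ((n - L k) ::ₘ Sm k).toFinset := by
      ext v
      simp only [Finset.mem_erase, Multiset.mem_toFinset]
      constructor
      · rintro ⟨hv0, hvm⟩
        have h1 : v ∈ (M (k + 1)).filter (fun a => a ≠ 0) :=
          Multiset.mem_filter.mpr ⟨hvm, hv0⟩
        rw [hPfilter k] at h1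
        have h3 : (M k).count 0 = n - L k := by have := hcount0 k; omega
        rwa [h3] at h1
      · intro hv
        have h3 : (M k).count 0 = n - L k := by have := hcount0 k; omega
        have h1 : v ∈ (M (k + 1)).filter (fun a => a ≠ 0) := by
          rw [hPfilter k, h3]; exact hv
        exact ⟨(Multiset.mem_filter.mp h1).2, (Multiset.mem_filter.mp h1).1⟩
    have hcnt : ∀ v ∈ ((n - L k) ::ₘ Sm k).toFinset,
        (M (k + 1)).count v = ((n - L k) ::ₘ Sm k).count v := by
      intro v hv
      have hv0 : v ≠ 0 := hQ0 v (Multiset.mem_toFinset.mp hv)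
      conv_lhs => rw [← decomp (M (k + 1))]
      rw [Multiset.count_add]
      have h3 : (M k).count 0 = n - L k := by have := hcount0 k; omega
      rw [hPfilter k, h3, Multiset.count_replicate, if_neg (Ne.symm hv0), add_zero]
    have hstart : Sm (k + 1) =
        ((M (k + 1)).toFinset.erase 0).val.map (fun j => (M (k + 1)).count j) := by
      simp only [hSmdef]
    rw [hstart, hTF, mult]
    exact Multiset.map_congr rfl (fun v hv => hcnt v (Finset.mem_val.mp hv))
  -- final contradictions from M 3 = M 1 or M 4 = M 1
  have hfinish3 : M 3 = M 1 → False := by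
    intro h
    exact hMne 1 3 (by omega) (by omega) (by omega) h.symm
  have hfinish4 : M 4 = M 1 → False := by
    intro h
    rcases eq_or_lt_of_le hl4 with h4 | h5
    · have h40 : M 4 = M 0 := by
        have := hMper 0
        rw [zero_add, ← h4] at this
        exact this
      exact hMne 0 1 (by omega) (by omega) (by omega) (h40.symm.trans h)
    · exact hMne 4 1 h5 (by omega) (by omega) h
  have hSm0mem : Sm 0 ∈ slist :=
    enum4 _ (hSmpos 0) (by rw [hSmsum]; exact hL4 0)
  by_cases hn9 : 9 ≤ n
  · -- large n: T-dynamics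
    have hTrec : ∀ k, Sm (k + 1) = T (Sm k) := by
      intro k
      rw [hrec k, T]
      rw [mult_cons_of_not_mem]
      intro hc
      have h1 := hSmle k _ hc
      have h2 := hL4 k
      have h3 := hLlt k
      omega
    have hSmIter : ∀ m, Sm m = T^[m] (Sm 0) := by
      intro m
      induction m with
      | zero => simp
      | succ m ih =>
        rw [hTrec m, ih]
        exact (Function.iterate_succ_apply' _ _ _).symm
    have hSmper : Sm (4 * l) = Sm 0 := by
      have h1 : M (4 * l) = M 0 := by
        have := hMperm 4 0
        simpa using this
      simp only [hSmdef]
      rw [h1]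
    have hbase := T_check _ hSm0mem
    have hstep : ∀ j, 4 ≤ j → T^[j + 2] (Sm 0) = T^[j] (Sm 0) := by
      intro j hj
      induction j, hj using Nat.le_induction with
      | base => exact hbase
      | succ j hj ih =>
        rw [show j + 1 + 2 = (j + 2) + 1 by ring, Function.iterate_succ_apply', ih]
        exact (Function.iterate_succ_apply' _ _ _).symm
    have hper4l : T^[4 * l] (Sm 0) = Sm 0 := by rw [← hSmIter]; exact hSmper
    have hS2 : Sm 2 = Sm 0 := by
      calc Sm 2 = T^[2] (Sm 0) := hSmIter 2
      _ = T^[2] (T^[4 * l] (Sm 0)) := by rw [hper4l]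
      _ = T^[2 + 4 * l] (Sm 0) := (Function.iterate_add_apply T 2 (4 * l) (Sm 0)).symm
      _ = T^[4 * l + 2] (Sm 0) := by rw [Nat.add_comm]
      _ = T^[4 * l] (Sm 0) := hstep _ (by omega)
      _ = Sm 0 := hper4l
    have hM31 : M 3 = M 1 := by
      have e1 : L 2 = L 0 := by rw [← hSmsum 2, hS2, hSmsum 0]
      have ha : L 3 = Multiset.card (Sm 2) + 1 := hLcard 2
      have hb : L 1 = Multiset.card (Sm 0) + 1 := hLcard 0
      have e2 : L 3 = L 1 := by rw [hS2] at ha; omega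
      have h1 : M 3 = (n - L 2) ::ₘ Sm 2 + Multiset.replicate (n - L 3) 0 := hstruct 2
      have h0 : M 1 = (n - L 0) ::ₘ Sm 0 + Multiset.replicate (n - L 1) 0 := hstruct 0
      rw [hS2, e1, e2] at h1
      rw [h1, ← h0]
    exact hfinish3 hM31
  · -- small n
    push_neg at hn9
    have hfinishA : (Phi n)^[8] (M 1) = (Phi n)^[6] (M 1) → False := by
      intro hAA
      have hstep : ∀ j, 6 ≤ j → (Phi n)^[j + 2] (M 1) = (Phi n)^[j] (M 1) := by
        intro j hj
        induction j, hj using Nat.le_induction with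
        | base => exact hAA
        | succ j hj ih =>
          rw [show j + 1 + 2 = (j + 2) + 1 by ring, Function.iterate_succ_apply', ih]
          exact (Function.iterate_succ_apply' _ _ _).symm
      have hper8l : (Phi n)^[8 * l] (M 1) = M 1 := by
        rw [← hMiter 1 (8 * l)]
        have := hMperm 8 1
        simpa using this
      have h2 : M 3 = M 1 := by
        calc M 3 = (Phi n)^[2] (M 1) := by
              have := hMiter 1 2; simpa using this
        _ = (Phi n)^[2] ((Phi n)^[8 * l] (M 1)) := by rw [hper8l]
        _ = (Phi n)^[2 + 8 * l] (M 1) := (Function.iterate_add_apply _ 2 (8 * l) _).symm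
        _ = (Phi n)^[8 * l + 2] (M 1) := by rw [Nat.add_comm]
        _ = (Phi n)^[8 * l] (M 1) := hstep _ (by omega)
        _ = M 1 := hper8l
      exact hfinish3 h2
    have hfinishB : (Phi n)^[9] (M 1) = (Phi n)^[6] (M 1) → False := by
      intro hBB
      have hstep : ∀ j, 6 ≤ j → (Phi n)^[j + 3] (M 1) = (Phi n)^[j] (M 1) := by
        intro j hj
        induction j, hj using Nat.le_induction with
        | base => exact hBB
        | succ j hj ih =>
          rw [show j + 1 + 3 = (j + 3) + 1 by ring, Function.iterate_succ_apply', ih]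
          exact (Function.iterate_succ_apply' _ _ _).symm
      have hper8l : (Phi n)^[8 * l] (M 1) = M 1 := by
        rw [← hMiter 1 (8 * l)]
        have := hMperm 8 1
        simpa using this
      have h2 : M 4 = M 1 := by
        calc M 4 = (Phi n)^[3] (M 1) := by
              have := hMiter 1 3; simpa using this
        _ = (Phi n)^[3] ((Phi n)^[8 * l] (M 1)) := by rw [hper8l]
        _ = (Phi n)^[3 + 8 * l] (M 1) := (Function.iterate_add_apply _ 3 (8 * l) _).symm
        _ = (Phi n)^[8 * l + 3] (M 1) := by rw [Nat.add_comm]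
        _ = (Phi n)^[8 * l] (M 1) := hstep _ (by omega)
        _ = M 1 := hper8l
      exact hfinish4 h2
    have hform : M 1 = EE n (Sm 0) := by
      have h0 : M 1 = (n - L 0) ::ₘ Sm 0 + Multiset.replicate (n - L 1) 0 := hstruct 0
      have e1 : L 0 = (Sm 0).sum := (hSmsum 0).symm
      have e2 : L 1 = Multiset.card (Sm 0) + 1 := hLcard 0
      rw [h0, e1, e2, EE]
    have hb1 : (Sm 0).sum ≤ n - 1 := by
      have := hLlt 0
      rw [hSmsum 0]
      omega
    have hb2 : Multiset.card (Sm 0) + 1 ≤ n - 1 := by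
      have h1 := hLlt 1
      have h2 : L 1 = Multiset.card (Sm 0) + 1 := hLcard 0
      omega
    have hvalid : ∀ j < 10, ∀ a ∈ (Phi n)^[j] (EE n (Sm 0)), a < n := by
      intro j hj a ha
      rw [← hform, ← hMiter 1 j] at ha
      exact hMval _ a ha
    have hnmem : n ∈ [2, 3, 4, 5, 6, 7, 8] := by
      simp only [List.mem_cons, List.not_mem_nil, or_false]
      omega
    have hd := small_check n hnmem (Sm 0) hSm0mem hb1 hb2 hvalid
    rcases hd with h | h
    · apply hfinishA
      rw [hform]
      exact h
    · apply hfinishB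
      rw [hform]
      exact h
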